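/- Let λ > 0, a* := 2/λ, and F a := λ * (a*/a − Real.log (a*/a) − 1). Let a : ℝ → ℝ be differentiable with a t > 0 and deriv a t = −2*λ*(a t − a*) for all t. Then for all t: deriv (deriv (F ∘ a)) t = 2 * λ * (a*/(a t)) * ((deriv a t)/(a t))^2. (This is the component of the non-metricity tensor of a straightening connection along the gradient flow: F̈ = −C^F(γ̇, γ̇, γ̇) with the choice λ-factor ≡ 0, and it is strictly positive away from equilibrium.) -/

import Mathlib

/-- **Second derivative of the gradient potential along a mode trajectory.**
For `λ > 0`, `a* = 2/λ`, `F a = λ (a*/a − log (a*/a) − 1)`, and any positive differentiable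
solution `a` of `a' = −2λ(a − a*)`, one has
`(F ∘ a)'' = 2 λ (a*/a) (a'/a)²`.
This is `F̈ = −C^F(γ̇, γ̇, γ̇)` for a straightening connection with factor `≡ 0`. -/
theorem second_derivative_mode_potential (lam : ℝ) (hlam : 0 < lam)
    (a : ℝ → ℝ) (ha_diff : Differentiable ℝ a)
    (ha_pos : ∀ t : ℝ, 0 < a t)
    (ha_ode : ∀ t : ℝ, deriv a t = -2 * lam * (a t - 2 / lam)) :
    ∀ t : ℝ,
      deriv (deriv ((fun x : ℝ => lam * ((2 / lam) / x - Real.log ((2 / lam) / x) - 1)) ∘ a)) t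
        = 2 * lam * ((2 / lam) / a t) * (deriv a t / a t) ^ 2 := by
  intro t
  set c : ℝ := 2 / lam with hc
  have hc0 : 0 < c := by positivity
  -- first derivative of F ∘ a
  have hF : ∀ s : ℝ, HasDerivAt ((fun x : ℝ => lam * (c / x - Real.log (c / x) - 1)) ∘ a)
      (lam * (-c / (a s) ^ 2 + 1 / a s) * deriv a s) s := by
    intro s
    have hx : (0 : ℝ) < a s := ha_pos s
    have h1 : HasDerivAt (fun x : ℝ => c / x) (-c / (a s) ^ 2) (a s) := by
      have := (hasDerivAt_inv hx.ne').const_mul c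
      convert this using 1
      any_goals rfl
      all_goals first
        | (funext x; simp [div_eq_mul_inv])
        | (field_simp)
    have hlog : HasDerivAt (fun x : ℝ => Real.log (c / x)) (-(1 / a s)) (a s) := by
      have h2 := (Real.hasDerivAt_log (by positivity : c / a s ≠ 0)).comp (a s) h1
      convert h2 using 1
      any_goals rfl
      field_simp
    have hFx : HasDerivAt (fun x : ℝ => lam * (c / x - Real.log (c / x) - 1))
        (lam * (-c / (a s) ^ 2 + 1 / a s)) (a s) := by
      have := ((h1.sub hlog).sub_const 1).const_mul lam
      convert this using 1
      any_goals rfl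
      ring
    exact hFx.comp s (ha_diff s).hasDerivAt
  have hd1 : deriv ((fun x : ℝ => lam * (c / x - Real.log (c / x) - 1)) ∘ a)
      = fun s => lam * (-c / (a s) ^ 2 + 1 / a s) * (-2 * lam * (a s - c)) := by
    funext s
    rw [(hF s).deriv, ha_ode s]
  rw [hd1]
  -- second derivative
  have hx : (0 : ℝ) < a t := ha_pos t
  have h2 : HasDerivAt (fun x : ℝ => x ^ 2) (2 * a t) (a t) := by
    simpa using hasDerivAt_pow 2 (a t)
  have hu : HasDerivAt (fun x : ℝ => lam * (-c / x ^ 2 + 1 / x))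
      (lam * (2 * c / (a t) ^ 3 - 1 / (a t) ^ 2)) (a t) := by
    have hinv2 : HasDerivAt (fun x : ℝ => (x ^ 2)⁻¹) (-(2 * a t) / ((a t) ^ 2) ^ 2) (a t) :=
      h2.inv (pow_ne_zero 2 hx.ne')
    have := ((hinv2.const_mul (-c)).add (hasDerivAt_inv hx.ne')).const_mul lam
    convert this using 1
    any_goals rfl
    all_goals first
      | (funext x; simp [div_eq_mul_inv])
      | (field_simp; ring)
  have hv : HasDerivAt (fun x : ℝ => -2 * lam * (x - c)) (-2 * lam) (a t) := by
    have := ((hasDerivAt_id (a t)).sub_const c).const_mul (-2 * lam)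
    simpa using this
  have hG := (hu.mul hv).comp t (ha_diff t).hasDerivAt
  have hg : HasDerivAt (fun s => lam * (-c / (a s) ^ 2 + 1 / a s) * (-2 * lam * (a s - c)))
      ((lam * (2 * c / (a t) ^ 3 - 1 / (a t) ^ 2) * (-2 * lam * (a t - c))
        + lam * (-c / (a t) ^ 2 + 1 / a t) * (-2 * lam)) * deriv a t) t := hG
  rw [hg.deriv, ha_ode t]
  field_simp
  ring
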